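/- If vᵢ is an eigenvector of the normalized Laplacian 𝓛_{Gᵢ} with eigenvalue λᵢ for i = 1,…,n, then ⊗ᵢvᵢ is an eigenvector of the normalized Laplacian of the Kronecker product graph ⊗ᵢGᵢ with eigenvalue 1 − ∏ᵢ(1 − λᵢ). -/
import Mathlib


open Matrix

/-- If `vᵢ` is an eigenvector of the normalized Laplacian `𝓛_{Gᵢ}` with eigenvalue `λᵢ`, then
`⊗ᵢ vᵢ` is an eigenvector of the normalized Laplacian of the Kronecker product graph `⊗ᵢGᵢ`
with eigenvalue `1 − ∏ᵢ(1 − λᵢ)`. -/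
theorem stmt10 (n : ℕ) (K : Fin n → ℕ) (G : ∀ i, SimpleGraph (Fin (K i)))
    [∀ i, DecidableRel (G i).Adj]
    (hdeg : ∀ i v, 0 < (G i).degree v)
    (lam : Fin n → ℝ) (v : ∀ i, Fin (K i) → ℝ) (hv : ∀ i, v i ≠ 0)
    (heig : ∀ i,
      ((1 : Matrix (Fin (K i)) (Fin (K i)) ℝ) -
          Matrix.diagonal (fun u => (Real.sqrt ((G i).degree u))⁻¹) * (G i).adjMatrix ℝ *
            Matrix.diagonal (fun u => (Real.sqrt ((G i).degree u))⁻¹)) *ᵥ v i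
        = lam i • v i) :
    (fun x : ∀ i, Fin (K i) => ∏ i, v i (x i)) ≠ 0 ∧
      ((1 : Matrix (∀ i, Fin (K i)) (∀ i, Fin (K i)) ℝ) -
          Matrix.diagonal (fun x : ∀ i, Fin (K i) => ∏ i, (Real.sqrt ((G i).degree (x i)))⁻¹) *
            (Matrix.of fun x y : ∀ i, Fin (K i) => ∏ i, (G i).adjMatrix ℝ (x i) (y i)) *
            Matrix.diagonal (fun x : ∀ i, Fin (K i) => ∏ i, (Real.sqrt ((G i).degree (x i)))⁻¹))
          *ᵥ (fun x : ∀ i, Fin (K i) => ∏ i, v i (x i))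
        = (1 - ∏ i, (1 - lam i)) • (fun x : ∀ i, Fin (K i) => ∏ i, v i (x i)) := by
  classical
  set d : ∀ i, Fin (K i) → ℝ := fun i u => (Real.sqrt ((G i).degree u))⁻¹ with hd
  have hN : ∀ i, (Matrix.diagonal (d i) * (G i).adjMatrix ℝ * Matrix.diagonal (d i)) *ᵥ v i
      = (1 - lam i) • v i := by
    intro i
    have h := heig i
    rw [Matrix.sub_mulVec, Matrix.one_mulVec] at h
    have h2 : (Matrix.diagonal (d i) * (G i).adjMatrix ℝ * Matrix.diagonal (d i)) *ᵥ v i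
        = v i - lam i • v i := by
      exact eq_sub_of_add_eq' (sub_eq_iff_eq_add.mp h).symm
    rw [h2, sub_smul, one_smul]
  have hx : ∀ i, ∃ u, v i u ≠ 0 := by
    intro i
    by_contra hc
    push_neg at hc
    exact hv i (funext fun u => hc u)
  constructor
  · intro h
    set x : ∀ i, Fin (K i) := fun i => (hx i).choose with hxdef
    have h0 : ∏ i, v i (x i) = 0 := congrFun h x
    obtain ⟨i, -, hi⟩ := Finset.prod_eq_zero_iff.mp h0
    exact (hx i).choose_spec hi
  · funext x
    have key : ((Matrix.diagonal (fun x : ∀ i, Fin (K i) => ∏ i, d i (x i)) *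
        (Matrix.of fun x y : ∀ i, Fin (K i) => ∏ i, (G i).adjMatrix ℝ (x i) (y i)) *
        Matrix.diagonal (fun x : ∀ i, Fin (K i) => ∏ i, d i (x i)))
          *ᵥ (fun x : ∀ i, Fin (K i) => ∏ i, v i (x i))) x
        = (∏ i, (1 - lam i)) * ∏ i, v i (x i) := by
      have step1 : ((Matrix.diagonal (fun x : ∀ i, Fin (K i) => ∏ i, d i (x i)) *
          (Matrix.of fun x y : ∀ i, Fin (K i) => ∏ i, (G i).adjMatrix ℝ (x i) (y i)) *
          Matrix.diagonal (fun x : ∀ i, Fin (K i) => ∏ i, d i (x i)))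
            *ᵥ (fun x : ∀ i, Fin (K i) => ∏ i, v i (x i))) x
          = ∑ y : ∀ i, Fin (K i), ∏ i,
              (d i (x i) * (G i).adjMatrix ℝ (x i) (y i) * d i (y i) * v i (y i)) := by
        simp only [Matrix.mulVec, dotProduct, Matrix.mul_diagonal, Matrix.diagonal_mul,
          Matrix.of_apply]
        refine Finset.sum_congr rfl fun y _ => ?_
        rw [← Finset.prod_mul_distrib, ← Finset.prod_mul_distrib, ← Finset.prod_mul_distrib]
      rw [step1]
      have step2 : ∑ y : ∀ i, Fin (K i), ∏ i,
            (d i (x i) * (G i).adjMatrix ℝ (x i) (y i) * d i (y i) * v i (y i))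
          = ∏ i, ∑ u : Fin (K i),
              (d i (x i) * (G i).adjMatrix ℝ (x i) u * d i u * v i u) := by
        rw [Finset.prod_univ_sum]
        rw [Fintype.piFinset_univ]
      rw [step2]
      have step3 : ∀ i, (∑ u : Fin (K i),
          (d i (x i) * (G i).adjMatrix ℝ (x i) u * d i u * v i u))
          = (1 - lam i) * v i (x i) := by
        intro i
        have := congrFun (hN i) (x i)
        simp only [Matrix.mulVec, dotProduct, Matrix.mul_diagonal, Matrix.diagonal_mul,
          Pi.smul_apply, smul_eq_mul] at this
        rw [← this]
      rw [Finset.prod_congr rfl fun i _ => step3 i, Finset.prod_mul_distrib]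
    have lhs : ∀ w : (∀ i, Fin (K i)) → ℝ,
        (((1 : Matrix (∀ i, Fin (K i)) (∀ i, Fin (K i)) ℝ) -
          Matrix.diagonal (fun x : ∀ i, Fin (K i) => ∏ i, d i (x i)) *
            (Matrix.of fun x y : ∀ i, Fin (K i) => ∏ i, (G i).adjMatrix ℝ (x i) (y i)) *
            Matrix.diagonal (fun x : ∀ i, Fin (K i) => ∏ i, d i (x i))) *ᵥ w) x
        = w x - ((Matrix.diagonal (fun x : ∀ i, Fin (K i) => ∏ i, d i (x i)) *
            (Matrix.of fun x y : ∀ i, Fin (K i) => ∏ i, (G i).adjMatrix ℝ (x i) (y i)) *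
            Matrix.diagonal (fun x : ∀ i, Fin (K i) => ∏ i, d i (x i))) *ᵥ w) x := by
      intro w
      rw [Matrix.sub_mulVec, Matrix.one_mulVec]
      rfl
    show _ = _
    rw [lhs, key]
    simp only [Pi.smul_apply, smul_eq_mul]
    ring
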